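/- Let C^c_{HL,c}(α) = sup over measurable sets E ⊆ ℝⁿ with 0 < |E| < ∞ of (1/|E|)·|{x ∈ ℝⁿ : M^c_{HL,c} χ_E(x) > α}|. Then C^c_{HL,c}(α) − 1 ∼_n 1/α − 1 as α → 1⁻; that is, there exist constants 0 < c ≤ C depending only on n and a threshold α₀ ∈ (0,1) such that for all α ∈ (α₀, 1), c·(1/α − 1) ≤ C^c_{HL,c}(α) − 1 ≤ C·(1/α − 1). In particular lim_{α→1⁻} C^c_{HL,c}(α) = 1. -/

import Mathlib

open MeasureTheory Set Filter
open scoped ENNReal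

/-- The open axis-parallel cube of side length `2r` centered at `x`. -/
def centeredCube {n : ℕ} (x : Fin n → ℝ) (r : ℝ) : Set (Fin n → ℝ) :=
  Set.univ.pi fun i => Set.Ioo (x i - r) (x i + r)

/-- The centered Hardy–Littlewood maximal operator with respect to
axis-parallel cubes on `ℝⁿ`. -/
noncomputable def MHLcc (n : ℕ) (f : (Fin n → ℝ) → ℝ≥0∞) (x : Fin n → ℝ) : ℝ≥0∞ :=
  ⨆ (r : ℝ) (_ : 0 < r),
    (∫⁻ y in centeredCube x r, f y) / volume (centeredCube x r)

/-- The sharp Tauberian constant `C^c_{HL,c}(α)` of the centered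
Hardy–Littlewood maximal operator with respect to cubes. -/
noncomputable def CHLcc (n : ℕ) (α : ℝ) : ℝ≥0∞ :=
  ⨆ (E : Set (Fin n → ℝ)) (_ : MeasurableSet E) (_ : 0 < volume E)
    (_ : volume E < ⊤),
    volume {x : Fin n → ℝ | MHLcc n (E.indicator 1) x > ENNReal.ofReal α}
      / volume E

lemma solyanik_cube_eq_ball {n : ℕ} (x : Fin n → ℝ) {r : ℝ} (hr : 0 < r) :
    centeredCube x r = Metric.ball x r := by
  rw [ball_pi _ hr]
  unfold centeredCube
  refine Set.pi_congr rfl fun i _ => ?_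
  rw [Real.ball_eq_Ioo]

lemma solyanik_ball_volume {n : ℕ} (x : Fin n → ℝ) {r : ℝ} (hr : 0 < r) :
    volume (Metric.ball x r) = ENNReal.ofReal ((2 * r) ^ n) := by
  rw [Real.volume_pi_ball x hr, Fintype.card_fin]

lemma solyanik_lintegral_indicator {n : ℕ} {E : Set (Fin n → ℝ)} (hE : MeasurableSet E)
    (B : Set (Fin n → ℝ)) :
    (∫⁻ y in B, E.indicator 1 y) = volume (E ∩ B) := by
  rw [lintegral_indicator hE]
  simp [Measure.restrict_apply hE]

/-- The term of the maximal function at a given radius, for an indicator. -/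
lemma solyanik_term_eq {n : ℕ} {E : Set (Fin n → ℝ)} (hE : MeasurableSet E)
    (x : Fin n → ℝ) {r : ℝ} (hr : 0 < r) :
    (∫⁻ y in centeredCube x r, E.indicator 1 y) / volume (centeredCube x r)
      = volume (E ∩ Metric.ball x r) / ENNReal.ofReal ((2 * r) ^ n) := by
  rw [solyanik_cube_eq_ball x hr, solyanik_lintegral_indicator hE,
    solyanik_ball_volume x hr]

lemma solyanik_term_le {n : ℕ} {E : Set (Fin n → ℝ)} (hE : MeasurableSet E)
    (x : Fin n → ℝ) {r : ℝ} (hr : 0 < r) :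
    volume (E ∩ Metric.ball x r) / ENNReal.ofReal ((2 * r) ^ n)
      ≤ MHLcc n (E.indicator 1) x := by
  rw [← solyanik_term_eq hE x hr]
  exact le_iSup₂_of_le r hr le_rfl

/-- Upper bound: a Besicovitch covering argument gives the sharp Solyanik
estimate for the centered maximal operator. -/
lemma solyanik_upper {n : ℕ} (hn : 1 ≤ n) {N : ℕ} {τ : ℝ} (hτ : 1 < τ)
    (hN : IsEmpty (Besicovitch.SatelliteConfig (Fin n → ℝ) N τ))
    {α : ℝ} (hα : α ∈ Set.Ioo (1/2 : ℝ) 1) :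
    CHLcc n α ≤ 1 + ENNReal.ofReal ((1 - α) / α) * N := by
  obtain ⟨hal, ha1⟩ := hα
  have ha0 : 0 < α := by linarith
  set k : ℝ≥0∞ := ENNReal.ofReal ((1 - α) / α) with hk
  refine iSup_le fun E => iSup_le fun hE => iSup_le fun hE0 => iSup_le fun hEtop => ?_
  rw [ENNReal.div_le_iff hE0.ne' hEtop.ne]
  set A := {x | MHLcc n (E.indicator 1) x > ENNReal.ofReal α} \ E with hA
  have hcover : {x | MHLcc n (E.indicator 1) x > ENNReal.ofReal α} ⊆ E ∪ A := by
    intro x hx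
    by_cases hxE : x ∈ E
    · exact Or.inl hxE
    · exact Or.inr ⟨hx, hxE⟩
  set R : ℝ := max 1 (2 * (volume E).toReal) with hR
  -- choose radii of high density for points in `A`
  have hrad : ∀ a : A, ∃ r : ℝ, 0 < r ∧ r ≤ R ∧
      ENNReal.ofReal α * ENNReal.ofReal ((2*r)^n)
        < volume (E ∩ Metric.ball (a : Fin n → ℝ) r) := by
    rintro ⟨a, haM, haE⟩
    have hM : ENNReal.ofReal α < MHLcc n (E.indicator 1) a := haM
    rw [MHLcc, lt_iSup_iff] at hM
    obtain ⟨r, hr⟩ := hM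
    rw [lt_iSup_iff] at hr
    obtain ⟨hr0, hr⟩ := hr
    rw [solyanik_term_eq hE a hr0] at hr
    have hballpos : (0:ℝ) < (2*r)^n := by positivity
    have hball : ENNReal.ofReal α * ENNReal.ofReal ((2*r)^n)
        < volume (E ∩ Metric.ball a r) :=
      (ENNReal.lt_div_iff_mul_lt
        (Or.inl (by simp only [ne_eq, ENNReal.ofReal_eq_zero, not_le]; exact hballpos))
        (Or.inl ENNReal.ofReal_ne_top)).1 hr
    refine ⟨r, hr0, ?_, hball⟩
    -- bound on the radius
    have h1 : ENNReal.ofReal ((2*r)^n / 2) ≤ volume E := by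
      calc ENNReal.ofReal ((2*r)^n / 2)
          = ENNReal.ofReal (1/2) * ENNReal.ofReal ((2*r)^n) := by
            rw [← ENNReal.ofReal_mul (by norm_num)]
            congr 1
            ring
        _ ≤ ENNReal.ofReal α * ENNReal.ofReal ((2*r)^n) :=
            mul_le_mul_left (ENNReal.ofReal_le_ofReal hal.le) _
        _ ≤ volume (E ∩ Metric.ball a r) := hball.le
        _ ≤ volume E := measure_mono Set.inter_subset_left
    rw [ENNReal.ofReal_le_iff_le_toReal hEtop.ne, div_le_iff₀ (by norm_num)] at h1
    by_contra hcon
    push_neg at hcon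
    rw [hR] at hcon
    have hr1 : (1:ℝ) < r := lt_of_le_of_lt (le_max_left _ _) hcon
    have hrK : 2 * (volume E).toReal < r := lt_of_le_of_lt (le_max_right _ _) hcon
    have h2 : 2 * r ≤ (2*r)^n := le_self_pow₀ (by linarith) (by omega)
    nlinarith [h1, h2, hr1, hrK]
  choose rad hrpos hrle hrball using hrad
  -- Besicovitch covering
  set q : Besicovitch.BallPackage A (Fin n → ℝ) :=
    { c := Subtype.val, r := rad, rpos := hrpos, r_bound := R, r_le := hrle } with hq
  obtain ⟨s, hsd, hscov⟩ := Besicovitch.exist_disjoint_covering_families hτ hN q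
  have hAsub : A ⊆ ⋃ i : Fin N, ⋃ j ∈ s i, (Metric.ball (q.c j) (q.r j) \ E) := by
    intro x hx
    have : x ∈ Set.range q.c := ⟨⟨x, hx⟩, rfl⟩
    have hx2 := hscov this
    simp only [Set.mem_iUnion] at hx2 ⊢
    obtain ⟨i, j, hj, hxball⟩ := hx2
    exact ⟨i, j, hj, hxball, hx.2⟩
  -- each family contributes at most `k * volume E`
  have hfam : ∀ i : Fin N,
      volume (⋃ j ∈ s i, (Metric.ball (q.c j) (q.r j) \ E)) ≤ k * volume E := by
    intro i
    -- countability
    have hposmem : ∀ j : A, 0 < volume (E ∩ Metric.ball (q.c j) (q.r j)) :=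
      fun j => lt_of_le_of_lt zero_le (hrball j)
    have hdisjsub : Pairwise (Function.onFun Disjoint fun j : ↥(s i) =>
        E ∩ Metric.ball (q.c j.1) (q.r j.1)) := by
      intro j l hjl
      have hne : (j : A) ≠ (l : A) := Subtype.coe_injective.ne hjl
      have hd := hsd i j.2 l.2 hne
      exact hd.mono (Set.inter_subset_right.trans Metric.ball_subset_closedBall)
        (Set.inter_subset_right.trans Metric.ball_subset_closedBall)
    have hcnt : (s i).Countable := by
      have h1 : Set.Countable {j : ↥(s i) |
          0 < volume (E ∩ Metric.ball (q.c j.1) (q.r j.1))} :=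
        MeasureTheory.Measure.countable_meas_pos_of_disjoint_iUnion
          (fun j => hE.inter Metric.isOpen_ball.measurableSet) hdisjsub
      have h2 : {j : ↥(s i) |
          0 < volume (E ∩ Metric.ball (q.c j.1) (q.r j.1))} = Set.univ :=
        Set.eq_univ_of_forall fun j => hposmem j.1
      rw [h2] at h1
      have := Set.countable_univ_iff.1 h1
      exact Set.countable_coe_iff.1 this
    -- the density estimate on each ball
    have hdiff : ∀ a : A, volume (Metric.ball (q.c a) (q.r a) \ E)
        ≤ k * volume (E ∩ Metric.ball (q.c a) (q.r a)) := by
      intro a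
      set v : ℝ≥0∞ := ENNReal.ofReal ((2 * rad a)^n) with hv
      have hvol : volume (Metric.ball (q.c a) (q.r a)) = v :=
        solyanik_ball_volume _ (hrpos a)
      have hsplit : volume (Metric.ball (q.c a) (q.r a) \ E)
          + volume (Metric.ball (q.c a) (q.r a) ∩ E) = v := by
        rw [← hvol]
        exact measure_diff_add_inter _ hE
      have hαv : ENNReal.ofReal α * v ≤ volume (Metric.ball (q.c a) (q.r a) ∩ E) := by
        rw [Set.inter_comm]
        exact (hrball a).le
      have hvsplit : v = ENNReal.ofReal (1 - α) * v + ENNReal.ofReal α * v := by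
        rw [← add_mul, ← ENNReal.ofReal_add (by linarith) ha0.le]
        norm_num
      have step1 : volume (Metric.ball (q.c a) (q.r a) \ E)
          ≤ ENNReal.ofReal (1 - α) * v := by
        rw [← ENNReal.add_le_add_iff_right
          (show ENNReal.ofReal α * v ≠ ⊤ from
            ENNReal.mul_ne_top ENNReal.ofReal_ne_top ENNReal.ofReal_ne_top)]
        calc volume (Metric.ball (q.c a) (q.r a) \ E) + ENNReal.ofReal α * v
            ≤ volume (Metric.ball (q.c a) (q.r a) \ E)
              + volume (Metric.ball (q.c a) (q.r a) ∩ E) := add_le_add le_rfl hαv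
          _ = v := hsplit
          _ = ENNReal.ofReal (1 - α) * v + ENNReal.ofReal α * v := hvsplit
      have step2 : ENNReal.ofReal (1 - α) * v
          ≤ k * volume (E ∩ Metric.ball (q.c a) (q.r a)) := by
        have hkα : k * ENNReal.ofReal α = ENNReal.ofReal (1 - α) := by
          rw [hk, ← ENNReal.ofReal_mul (div_nonneg (by linarith) ha0.le)]
          congr 1
          field_simp
        calc ENNReal.ofReal (1 - α) * v = k * (ENNReal.ofReal α * v) := by
              rw [← mul_assoc, hkα]
          _ ≤ k * volume (E ∩ Metric.ball (q.c a) (q.r a)) := by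
              rw [Set.inter_comm]
              exact mul_le_mul_right hαv k
      exact step1.trans step2
    calc volume (⋃ j ∈ s i, (Metric.ball (q.c j) (q.r j) \ E))
        ≤ ∑' j : ↥(s i), volume (Metric.ball (q.c j.1) (q.r j.1) \ E) :=
          measure_biUnion_le volume hcnt _
      _ ≤ ∑' j : ↥(s i), k * volume (E ∩ Metric.ball (q.c j.1) (q.r j.1)) :=
          ENNReal.tsum_le_tsum fun j => hdiff j.1
      _ = k * ∑' j : ↥(s i), volume (E ∩ Metric.ball (q.c j.1) (q.r j.1)) :=
          ENNReal.tsum_mul_left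
      _ = k * volume (⋃ j ∈ s i, (E ∩ Metric.ball (q.c j) (q.r j))) := by
          rw [measure_biUnion hcnt ?_ fun j _ => hE.inter Metric.isOpen_ball.measurableSet]
          intro j hj l hl hjl
          have hd := hsd i hj hl hjl
          exact hd.mono (Set.inter_subset_right.trans Metric.ball_subset_closedBall)
            (Set.inter_subset_right.trans Metric.ball_subset_closedBall)
      _ ≤ k * volume E := by
          refine mul_le_mul_right (measure_mono ?_) k
          exact Set.iUnion₂_subset fun j _ => Set.inter_subset_left
  -- putting everything together
  have hAvol : volume A ≤ (N : ℝ≥0∞) * (k * volume E) := by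
    calc volume A ≤ volume (⋃ i : Fin N, ⋃ j ∈ s i, (Metric.ball (q.c j) (q.r j) \ E)) :=
          measure_mono hAsub
      _ ≤ ∑' i : Fin N, volume (⋃ j ∈ s i, (Metric.ball (q.c j) (q.r j) \ E)) :=
          measure_iUnion_le _
      _ ≤ ∑' _i : Fin N, k * volume E := ENNReal.tsum_le_tsum hfam
      _ = (N : ℝ≥0∞) * (k * volume E) := by
          rw [tsum_fintype]
          simp [Finset.sum_const, Finset.card_univ, nsmul_eq_mul]
  calc volume {x | MHLcc n (E.indicator 1) x > ENNReal.ofReal α}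
      ≤ volume (E ∪ A) := measure_mono hcover
    _ ≤ volume E + volume A := measure_union_le E A
    _ ≤ volume E + (N : ℝ≥0∞) * (k * volume E) := add_le_add le_rfl hAvol
    _ = (1 + k * N) * volume E := by ring

/-- Lower bound: a cube with a thin slab removed. -/
lemma solyanik_lower {n : ℕ} (hn : 1 ≤ n) {α : ℝ} (hα : α ∈ Set.Ioo (1/2 : ℝ) 1) :
    1 + ENNReal.ofReal ((1 - α) / 2 ^ (n + 1)) ≤ CHLcc n α := by
  obtain ⟨hal, ha1⟩ := hα
  have ha0 : 0 < α := by linarith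
  set h : ℝ := (1 - α) / 4 with hh
  have hh0 : 0 < h := by rw [hh]; exact div_pos (by linarith) (by norm_num)
  have hh8 : h < 1/8 := by rw [hh]; nlinarith
  set i0 : Fin n := ⟨0, hn⟩ with hi0
  set E : Set (Fin n → ℝ) :=
    (Set.univ.pi fun _ : Fin n => Set.Ioo (-1:ℝ) 1) ∩
      ((fun x : Fin n → ℝ => |x i0|) ⁻¹' Set.Ioi h) with hEdef
  have hEmeas : MeasurableSet E :=
    (MeasurableSet.univ_pi fun _ => measurableSet_Ioo).inter
      (((measurable_pi_apply i0).abs) measurableSet_Ioi)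
  have hEopen : IsOpen E :=
    ((isOpen_set_pi Set.finite_univ fun _ _ => isOpen_Ioo)).inter
      (isOpen_Ioi.preimage ((continuous_apply i0).abs))
  set G : Set (Fin n → ℝ) :=
    Set.univ.pi fun i => if i = i0 then Set.Ioo (-h) h else Set.Ioo (-(1/2):ℝ) (1/2)
    with hGdef
  have hGmeas : MeasurableSet G := by
    refine MeasurableSet.univ_pi fun i => ?_
    split <;> exact measurableSet_Ioo
  -- every point of E is in the superlevel set
  have hE_M : ∀ x ∈ E, ENNReal.ofReal α < MHLcc n (E.indicator 1) x := by
    intro x hx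
    obtain ⟨ε, hε0, hball⟩ := Metric.isOpen_iff.1 hEopen x hx
    have hterm := solyanik_term_le hEmeas x hε0
    have heq : E ∩ Metric.ball x ε = Metric.ball x ε :=
      Set.inter_eq_self_of_subset_right hball
    rw [heq, ← solyanik_ball_volume x hε0] at hterm
    rw [ENNReal.div_self (by
        rw [solyanik_ball_volume x hε0]
        simp only [ne_eq, ENNReal.ofReal_eq_zero, not_le]
        positivity) (by
        rw [solyanik_ball_volume x hε0]
        exact ENNReal.ofReal_ne_top)] at hterm
    exact lt_of_lt_of_le (ENNReal.ofReal_lt_one.2 ha1) hterm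
  -- every point of G is in the superlevel set
  have hG_M : ∀ x ∈ G, ENNReal.ofReal α < MHLcc n (E.indicator 1) x := by
    intro x hx
    rw [hGdef, Set.mem_univ_pi] at hx
    have hxsmall : ∀ i, |x i| < 1/2 := by
      intro i
      have := hx i
      split at this
      · rw [abs_lt]; constructor <;> [linarith [this.1]; linarith [this.2]]
      · rw [abs_lt]; exact ⟨by linarith [this.1], by linarith [this.2]⟩
    set B : Set (Fin n → ℝ) := Metric.ball x (1/2) with hBdef
    set S : Set (Fin n → ℝ) :=
      Set.univ.pi fun i => if i = i0 then Set.Icc (-h) h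
        else Set.Ioo (x i - 1/2) (x i + 1/2) with hSdef
    have hBS : B \ E ⊆ S := by
      rintro y ⟨hyB, hyE⟩
      have hyc : ∀ i, |y i - x i| < 1/2 := by
        intro i
        have h1 : dist (y i) (x i) ≤ dist y x := dist_le_pi_dist y x i
        have h2 : dist y x < 1/2 := Metric.mem_ball.1 hyB
        rw [Real.dist_eq] at h1
        linarith
      have hy1 : ∀ i, y i ∈ Set.Ioo (-1:ℝ) 1 := by
        intro i
        have h1 := hyc i
        have h2 := hxsmall i
        rw [abs_lt] at h1 h2
        exact ⟨by linarith [h1.1, h2.1], by linarith [h1.2, h2.2]⟩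
      have hy2 : |y i0| ≤ h := by
        by_contra hcon
        push_neg at hcon
        exact hyE ⟨fun i _ => hy1 i, hcon⟩
      rw [hSdef, Set.mem_univ_pi]
      intro i
      split
      · rename_i hii
        rw [hii]
        exact abs_le.1 hy2
      · have := hyc i
        rw [abs_lt] at this
        exact ⟨by linarith [this.1], by linarith [this.2]⟩
    have hSvol : volume S = ENNReal.ofReal (2 * h) := by
      rw [hSdef, volume_pi_pi]
      calc (∏ i, volume (if i = i0 then Set.Icc (-h) h
            else Set.Ioo (x i - 1/2) (x i + 1/2)))
          = ∏ i, if i = i0 then ENNReal.ofReal (2 * h) else 1 := by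
            refine Finset.prod_congr rfl fun i _ => ?_
            split
            · rw [Real.volume_Icc]
              congr 1
              ring
            · rw [Real.volume_Ioo,
                show x i + 1/2 - (x i - 1/2) = 1 by ring, ENNReal.ofReal_one]
        _ = ENNReal.ofReal (2 * h) := by
            rw [Finset.prod_ite_eq' Finset.univ i0 fun _ => ENNReal.ofReal (2 * h)]
            simp
    have hBvol : volume B = 1 := by
      rw [hBdef, solyanik_ball_volume x (by norm_num : (0:ℝ) < 1/2)]
      norm_num
    have hEB : ENNReal.ofReal α < volume (E ∩ Metric.ball x (1/2)) := by
      by_contra hcon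
      push_neg at hcon
      have hsplit : volume (B ∩ E) + volume (B \ E) = volume B :=
        measure_inter_add_diff B hEmeas
      have hdiff : volume (B \ E) ≤ ENNReal.ofReal (2 * h) :=
        le_trans (measure_mono hBS) hSvol.le
      have hBE : volume (B ∩ E) ≤ ENNReal.ofReal α := by
        rwa [Set.inter_comm] at hcon
      have : (1 : ℝ≥0∞) ≤ ENNReal.ofReal α + ENNReal.ofReal (2 * h) := by
        rw [← hBvol, ← hsplit]
        exact add_le_add hBE hdiff
      rw [← ENNReal.ofReal_add ha0.le (by positivity)] at this
      have hlt : ENNReal.ofReal (α + 2 * h) < 1 :=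
        ENNReal.ofReal_lt_one.2 (by rw [hh]; linarith)
      exact absurd (lt_of_le_of_lt this hlt) (lt_irrefl _)
    have hterm := solyanik_term_le hEmeas x (by norm_num : (0:ℝ) < 1/2)
    refine lt_of_lt_of_le ?_ hterm
    rw [show ((2 * (1/2:ℝ)) ^ n) = 1 by norm_num, ENNReal.ofReal_one,
      div_one]
    exact hEB
  -- both sets are contained in the superlevel set
  have hsub : E ∪ G ⊆ {x | MHLcc n (E.indicator 1) x > ENNReal.ofReal α} := by
    rintro x (hx | hx)
    · exact hE_M x hx
    · exact hG_M x hx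
  -- disjointness
  have hdisj : Disjoint E G := by
    rw [Set.disjoint_left]
    intro x hxE hxG
    rw [hGdef, Set.mem_univ_pi] at hxG
    have h1 := hxG i0
    rw [if_pos rfl] at h1
    have h2 : h < |x i0| := hxE.2
    rw [lt_abs] at h2
    obtain ⟨h3, h4⟩ := h1
    rcases h2 with h2 | h2 <;> linarith
  -- measure of G
  have hGvol : volume G = ENNReal.ofReal (2 * h) := by
    rw [hGdef, volume_pi_pi]
    calc (∏ i, volume (if i = i0 then Set.Ioo (-h) h
          else Set.Ioo (-(1/2):ℝ) (1/2)))
        = ∏ i, if i = i0 then ENNReal.ofReal (2 * h) else 1 := by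
          refine Finset.prod_congr rfl fun i _ => ?_
          split
          · rw [Real.volume_Ioo]
            congr 1
            ring
          · rw [Real.volume_Ioo, show (1/2 : ℝ) - -(1/2) = 1 by ring,
              ENNReal.ofReal_one]
      _ = ENNReal.ofReal (2 * h) := by
          rw [Finset.prod_ite_eq' Finset.univ i0 fun _ => ENNReal.ofReal (2 * h)]
          simp
  -- measure of E : positive and finite
  have hEub : volume E ≤ ENNReal.ofReal (2 ^ n) := by
    refine le_trans (measure_mono (Set.inter_subset_left)) ?_
    rw [volume_pi_pi]
    simp only [Real.volume_Ioo, show (1:ℝ) - -1 = 2 by ring]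
    rw [Finset.prod_const, Finset.card_univ, Fintype.card_fin,
      ← ENNReal.ofReal_pow (by norm_num)]
  have hEtop : volume E < ⊤ := lt_of_le_of_lt hEub ENNReal.ofReal_lt_top
  have hE0 : 0 < volume E := by
    have hPsub : (Set.univ.pi fun _ : Fin n => Set.Ioo h 1) ⊆ E := by
      intro x hx
      rw [Set.mem_univ_pi] at hx
      refine ⟨fun i _ => ⟨by linarith [(hx i).1], (hx i).2⟩, ?_⟩
      have := (hx i0).1
      calc h < x i0 := this
        _ ≤ |x i0| := le_abs_self _
    refine lt_of_lt_of_le ?_ (measure_mono hPsub)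
    rw [volume_pi_pi]
    simp only [Real.volume_Ioo]
    rw [Finset.prod_const, Finset.card_univ, Fintype.card_fin]
    exact ENNReal.pow_pos (ENNReal.ofReal_pos.2 (by linarith)) n
  -- conclude
  have hkey : 1 + ENNReal.ofReal ((1 - α) / 2 ^ (n + 1))
      ≤ volume {x | MHLcc n (E.indicator 1) x > ENNReal.ofReal α} / volume E := by
    have hstep1 : volume (E ∪ G) / volume E
        ≤ volume {x | MHLcc n (E.indicator 1) x > ENNReal.ofReal α} / volume E :=
      ENNReal.div_le_div (measure_mono hsub) le_rfl
    refine le_trans ?_ hstep1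
    rw [measure_union hdisj hGmeas, ENNReal.add_div,
      ENNReal.div_self hE0.ne' hEtop.ne]
    refine add_le_add le_rfl ?_
    calc ENNReal.ofReal ((1 - α) / 2 ^ (n + 1))
        = ENNReal.ofReal ((2 * h) / 2 ^ n) := by
          congr 1
          rw [hh]
          field_simp
          ring
      _ = ENNReal.ofReal (2 * h) / ENNReal.ofReal (2 ^ n) := by
          rw [ENNReal.ofReal_div_of_pos (by positivity)]
      _ ≤ volume G / volume E := by
          rw [hGvol]
          exact ENNReal.div_le_div le_rfl hEub
  refine le_trans hkey ?_
  exact le_iSup_of_le E (le_iSup_of_le hEmeas (le_iSup_of_le hE0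
    (le_iSup_of_le hEtop le_rfl)))

theorem centered_cube_solyanik_sharp (n : ℕ) (hn : 1 ≤ n) :
    (∃ c C : ℝ, 0 < c ∧ c ≤ C ∧ ∃ α₀ ∈ Set.Ioo (0 : ℝ) 1,
      ∀ α ∈ Set.Ioo α₀ 1,
        ENNReal.ofReal (c * (1 / α - 1)) ≤ CHLcc n α - 1 ∧
        CHLcc n α - 1 ≤ ENNReal.ofReal (C * (1 / α - 1))) ∧
    Filter.Tendsto (CHLcc n) (nhdsWithin 1 (Set.Iio 1)) (nhds 1) := by
  obtain ⟨N, τ, hτ, hN⟩ :=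
    HasBesicovitchCovering.no_satelliteConfig (α := Fin n → ℝ)
  have key : ∀ α ∈ Set.Ioo (1/2 : ℝ) 1,
      ENNReal.ofReal ((1 / 2 ^ (n + 2)) * (1 / α - 1)) ≤ CHLcc n α - 1 ∧
      CHLcc n α - 1 ≤ ENNReal.ofReal (((N : ℝ) + 1) * (1 / α - 1)) := by
    intro α hα
    obtain ⟨hal, hα1⟩ := hα
    have hα0 : 0 < α := lt_trans (by norm_num) hal
    constructor
    · -- lower bound
      have h1 := solyanik_lower hn ⟨hal, hα1⟩
      have h2 : ENNReal.ofReal ((1 - α) / 2 ^ (n + 1)) ≤ CHLcc n α - 1 :=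
        ENNReal.le_sub_of_add_le_left ENNReal.one_ne_top h1
      refine le_trans (ENNReal.ofReal_le_ofReal ?_) h2
      have hinv : 1 / α - 1 ≤ 2 * (1 - α) := by
        rw [div_sub' hα0.ne', div_le_iff₀ hα0]
        nlinarith
      calc (1 / 2 ^ (n + 2) : ℝ) * (1 / α - 1) ≤ (1 / 2 ^ (n + 2)) * (2 * (1 - α)) :=
            mul_le_mul_of_nonneg_left hinv (by positivity)
        _ = (1 - α) / 2 ^ (n + 1) := by ring
    · -- upper bound
      have h1 := solyanik_upper hn hτ hN ⟨hal, hα1⟩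
      have h2 : CHLcc n α - 1 ≤ ENNReal.ofReal ((1 - α) / α) * N :=
        tsub_le_iff_left.2 h1
      refine h2.trans ?_
      have : ENNReal.ofReal ((1 - α) / α) * N = ENNReal.ofReal ((1 - α) / α * N) := by
        rw [ENNReal.ofReal_mul (div_nonneg (by linarith) hα0.le), ENNReal.ofReal_natCast]
      rw [this]
      apply ENNReal.ofReal_le_ofReal
      have h3 : (1 - α) / α = 1 / α - 1 := by field_simp
      rw [h3, mul_comm]
      have h4 : (0:ℝ) ≤ 1 / α - 1 := by
        rw [sub_nonneg, le_div_iff₀ hα0, one_mul]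
        exact hα1.le
      nlinarith [h4]
  constructor
  · refine ⟨1 / 2 ^ (n + 2), (N : ℝ) + 1, by positivity, ?_, 1/2, by norm_num, key⟩
    have : (1 : ℝ) ≤ (N : ℝ) + 1 := le_add_of_nonneg_left (Nat.cast_nonneg _)
    calc (1 / 2 ^ (n + 2) : ℝ) ≤ 1 := by
          rw [div_le_one (by positivity)]
          exact one_le_pow₀ (by norm_num)
      _ ≤ (N : ℝ) + 1 := this
  · -- the limit
    have hup : ∀ᶠ α in nhdsWithin (1:ℝ) (Set.Iio 1),
        CHLcc n α ≤ 1 + ENNReal.ofReal ((1 - α) / α) * N := by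
      filter_upwards [Ioo_mem_nhdsLT_of_mem (by norm_num : (1:ℝ) ∈ Set.Ioc (1/2 : ℝ) 1)]
        with α hα using solyanik_upper hn hτ hN hα
    have hlo : ∀ᶠ α in nhdsWithin (1:ℝ) (Set.Iio 1), (1 : ℝ≥0∞) ≤ CHLcc n α := by
      filter_upwards [Ioo_mem_nhdsLT_of_mem (by norm_num : (1:ℝ) ∈ Set.Ioc (1/2 : ℝ) 1)]
        with α hα using le_trans le_self_add (solyanik_lower hn hα)
    have htend : Filter.Tendsto (fun α : ℝ => 1 + ENNReal.ofReal ((1 - α) / α) * N)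
        (nhdsWithin 1 (Set.Iio 1)) (nhds 1) := by
      have h0 : Filter.Tendsto (fun α : ℝ => (1 - α) / α)
          (nhdsWithin 1 (Set.Iio 1)) (nhds 0) := by
        have : ContinuousAt (fun α : ℝ => (1 - α) / α) 1 := by
          apply ContinuousAt.div
          · fun_prop
          · fun_prop
          · norm_num
        have h' := this.tendsto.mono_left
          (nhdsWithin_le_nhds (s := Set.Iio (1:ℝ)))
        simpa using h'
      have h1 : Filter.Tendsto (fun α : ℝ => ENNReal.ofReal ((1 - α) / α) * (N : ℝ≥0∞))
          (nhdsWithin 1 (Set.Iio 1)) (nhds 0) := by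
        have := (ENNReal.continuous_ofReal.tendsto 0).comp h0
        have h2 := ENNReal.Tendsto.mul_const this (Or.inr (ENNReal.natCast_ne_top N))
        simpa using h2
      have := Filter.Tendsto.const_add (1 : ℝ≥0∞) h1
      simpa using this
    exact tendsto_of_tendsto_of_tendsto_of_le_of_le' tendsto_const_nhds htend hlo hup
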